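/- arXiv:2307.14101 — 2 statements merged into one kernel-verified Lean document; each statement's English description precedes it below -/
import Mathlib

section
/- If f is L-smooth, μ-PL, and the constant step size h = (1/L)·(1−α)/(1+α)² is used in x^{k+1} = x^k − h∇̃f(x^k) with relative gradient error α ∈ [0,1), then f(x^{k+1}) − f(x^k) ≤ −(1/(2L))·((1−α)²/(1+α)²)‖∇f(x^k)‖², and consequently f(x^N) − f* ≤ (1 − (μ/L)(1−α)²/(1+α)²)^N (f(x^0) − f*). -/
open Set
open scoped InnerProductSpace

lemma descent_aux {n : ℕ} (f : EuclideanSpace ℝ (Fin n) → ℝ)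
    (hf : Differentiable ℝ f) (L : ℝ)
    (hsmooth : ∀ x y, ‖gradient f y - gradient f x‖ ≤ L * ‖y - x‖)
    (x y : EuclideanSpace ℝ (Fin n)) :
    f y ≤ f x + ⟪gradient f x, y - x⟫_ℝ + L / 2 * ‖y - x‖ ^ 2 := by
  set v := y - x with hv
  set g := gradient f x with hg
  set φ : ℝ → ℝ := fun t => f (x + t • v) - t * ⟪g, v⟫_ℝ - L / 2 * t ^ 2 * ‖v‖ ^ 2 with hφ
  have hline : ∀ t : ℝ, HasDerivAt (fun s : ℝ => f (x + s • v)) ⟪gradient f (x + t • v), v⟫_ℝ t := by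
    intro t
    have h1 : HasDerivAt (fun s : ℝ => x + s • v) v t := by
      simpa using ((hasDerivAt_id t).smul_const v).const_add x
    have h2 := (hf (x + t • v)).hasGradientAt
    rw [hasGradientAt_iff_hasFDerivAt] at h2
    have := h2.comp_hasDerivAt t h1
    exact this.congr_deriv (by simp)
  have hφ' : ∀ t : ℝ, HasDerivAt φ (⟪gradient f (x + t • v), v⟫_ℝ - ⟪g, v⟫_ℝ - L * t * ‖v‖ ^ 2) t := by
    intro t
    have h1 := (hline t).sub (((hasDerivAt_id t).mul_const ⟪g, v⟫_ℝ))
    have h2 : HasDerivAt (fun t : ℝ => L / 2 * t ^ 2 * ‖v‖ ^ 2) (L * t * ‖v‖ ^ 2) t := by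
      have := ((hasDerivAt_pow 2 t).const_mul (L / 2)).mul_const (‖v‖ ^ 2)
      exact this.congr_deriv (by ring)
    exact (h1.sub h2).congr_deriv (by ring)
  have key : φ 1 ≤ φ 0 := by
    have hc : ContinuousOn φ (Icc 0 1) := ((Differentiable.continuous
      (fun t => (hφ' t).differentiableAt) : Continuous φ)).continuousOn
    have hd : ∀ t ∈ interior (Icc (0:ℝ) 1), deriv φ t ≤ 0 := by
      intro t ht
      rw [interior_Icc] at ht
      rw [(hφ' t).deriv]
      have hb : ⟪gradient f (x + t • v) - g, v⟫_ℝ ≤ L * t * ‖v‖ ^ 2 := by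
        calc ⟪gradient f (x + t • v) - g, v⟫_ℝ ≤ ‖gradient f (x + t • v) - g‖ * ‖v‖ :=
              real_inner_le_norm _ _
          _ ≤ (L * ‖(x + t • v) - x‖) * ‖v‖ := by
              gcongr; exact hsmooth x (x + t • v)
          _ = L * (|t| * ‖v‖) * ‖v‖ := by rw [add_sub_cancel_left, norm_smul]; simp
          _ = L * |t| * ‖v‖ ^ 2 := by ring
          _ ≤ L * t * ‖v‖ ^ 2 := by
              rw [abs_of_pos ht.1]
      have := inner_sub_left (𝕜 := ℝ) (gradient f (x + t • v)) g v
      linarith [hb, this.symm.le, this.le]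
    have := antitoneOn_of_deriv_nonpos (convex_Icc (0:ℝ) 1) hc
      (by intro t ht; exact ((hφ' t).differentiableAt).differentiableWithinAt) hd
    exact this (by norm_num) (by norm_num) (by norm_num)
  simp only [hφ, one_smul, zero_smul, add_zero] at key
  have : x + v = y := by rw [hv]; abel
  rw [this] at key
  nlinarith [key]

set_option maxHeartbeats 1000000 in
/-- Constant step size h = (1/L)(1−α)/(1+α)² with relative gradient error:
per-step decrease in terms of the true gradient and linear convergence. -/
theorem stmt14 {n : ℕ} (f : EuclideanSpace ℝ (Fin n) → ℝ)
    (hf : Differentiable ℝ f)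
    (L μ : ℝ) (hμ : 0 < μ) (hμL : μ ≤ L)
    (hsmooth : ∀ x y, ‖gradient f y - gradient f x‖ ≤ L * ‖y - x‖)
    (fstar : ℝ) (hmin : ∀ y, fstar ≤ f y)
    (hPL : ∀ y, f y - fstar ≤ (1 / (2 * μ)) * ‖gradient f y‖ ^ 2)
    (α : ℝ) (hα0 : 0 ≤ α) (hα1 : α < 1)
    (x : ℕ → EuclideanSpace ℝ (Fin n))
    (tg : ℕ → EuclideanSpace ℝ (Fin n))
    (herr : ∀ k, ‖tg k - gradient f (x k)‖ ≤ α * ‖gradient f (x k)‖)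
    (hiter : ∀ k, x (k + 1) = x k - ((1 / L) * ((1 - α) / (1 + α) ^ 2)) • tg k) :
    (∀ k, f (x (k + 1)) - f (x k)
      ≤ -(1 / (2 * L)) * ((1 - α) ^ 2 / (1 + α) ^ 2) * ‖gradient f (x k)‖ ^ 2) ∧
    (∀ N : ℕ, f (x N) - fstar
      ≤ (1 - (μ / L) * (1 - α) ^ 2 / (1 + α) ^ 2) ^ N * (f (x 0) - fstar)) := by
  have hL : 0 < L := lt_of_lt_of_le hμ hμL
  have hA : (0:ℝ) < 1 + α := by linarith
  set h : ℝ := (1 / L) * ((1 - α) / (1 + α) ^ 2) with hh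
  have hh0 : 0 ≤ h := by
    apply mul_nonneg (by positivity)
    apply div_nonneg (by linarith) (by positivity)
  have step : ∀ k, f (x (k + 1)) - f (x k)
      ≤ -(1 / (2 * L)) * ((1 - α) ^ 2 / (1 + α) ^ 2) * ‖gradient f (x k)‖ ^ 2 := by
    intro k
    set g := gradient f (x k) with hg
    set t := tg k with ht
    set G := ‖g‖ with hG
    have hGnn : 0 ≤ G := norm_nonneg _
    have hdesc := descent_aux f hf L hsmooth (x k) (x (k + 1))
    have hyx : x (k + 1) - x k = -(h • t) := by rw [hiter k]; abel
    have hip : (1 - α) * G ^ 2 ≤ ⟪g, t⟫_ℝ := by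
      have h1 : |⟪g, t - g⟫_ℝ| ≤ ‖g‖ * ‖t - g‖ := abs_real_inner_le_norm _ _
      have h2 : ‖t - g‖ ≤ α * G := herr k
      have h3 : ⟪g, t⟫_ℝ = ⟪g, g⟫_ℝ + ⟪g, t - g⟫_ℝ := by
        rw [← inner_add_right]; norm_num
      have h4 : ⟪g, g⟫_ℝ = G ^ 2 := real_inner_self_eq_norm_sq g
      have h5 : -(‖g‖ * ‖t - g‖) ≤ ⟪g, t - g⟫_ℝ := neg_le_of_abs_le h1
      nlinarith [norm_nonneg (t - g)]
    have hT : ‖t‖ ≤ (1 + α) * G := by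
      have := norm_sub_norm_le t g
      have h2 : ‖t - g‖ ≤ α * G := herr k
      linarith
    have hinner : ⟪g, x (k + 1) - x k⟫_ℝ = -(h * ⟪g, t⟫_ℝ) := by
      rw [hyx, inner_neg_right, real_inner_smul_right]
    have hnorm : ‖x (k + 1) - x k‖ = h * ‖t‖ := by
      rw [hyx, norm_neg, norm_smul, Real.norm_eq_abs, abs_of_nonneg hh0]
    rw [hinner, hnorm] at hdesc
    have hbound : f (x (k + 1)) - f (x k)
        ≤ -(h * ((1 - α) * G ^ 2)) + L / 2 * (h * ((1 + α) * G)) ^ 2 := by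
      have h1 : (h * ‖t‖) ^ 2 ≤ (h * ((1 + α) * G)) ^ 2 := by
        apply pow_le_pow_left₀ (by positivity)
        exact mul_le_mul_of_nonneg_left hT hh0
      nlinarith [hdesc]
    have halg : -(h * ((1 - α) * G ^ 2)) + L / 2 * (h * ((1 + α) * G)) ^ 2
        = -(1 / (2 * L)) * ((1 - α) ^ 2 / (1 + α) ^ 2) * G ^ 2 := by
      rw [hh]
      field_simp
      ring
    linarith [hbound, halg.le]
  refine ⟨step, ?_⟩
  set ρ : ℝ := 1 - (μ / L) * (1 - α) ^ 2 / (1 + α) ^ 2 with hρ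
  have hρ0 : 0 ≤ ρ := by
    have h1 : (1 - α) ^ 2 ≤ (1 + α) ^ 2 := by nlinarith
    have h2 : (μ / L) * (1 - α) ^ 2 / (1 + α) ^ 2 ≤ 1 := by
      rw [div_le_one (by positivity)]
      have : μ / L ≤ 1 := (div_le_one hL).2 hμL
      nlinarith [div_nonneg hμ.le hL.le]
    rw [hρ]; linarith
  have hcontr : ∀ k, f (x (k + 1)) - fstar ≤ ρ * (f (x k) - fstar) := by
    intro k
    have h1 := step k
    have h2 := hPL (x k)
    set G := ‖gradient f (x k)‖ with hG
    have h3 : 2 * μ * (f (x k) - fstar) ≤ G ^ 2 := by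
      rw [div_mul_eq_mul_div, le_div_iff₀ (by positivity)] at h2
      nlinarith [h2]
    have hc : 0 ≤ (1 / (2 * L)) * ((1 - α) ^ 2 / (1 + α) ^ 2) := by positivity
    have h4 : f (x (k + 1)) - fstar ≤ (f (x k) - fstar)
        - (1 / (2 * L)) * ((1 - α) ^ 2 / (1 + α) ^ 2) * (2 * μ * (f (x k) - fstar)) := by
      have hm := mul_le_mul_of_nonneg_left h3 hc
      linarith [h1, hm]
    have h5 : (f (x k) - fstar)
        - (1 / (2 * L)) * ((1 - α) ^ 2 / (1 + α) ^ 2) * (2 * μ * (f (x k) - fstar))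
        = ρ * (f (x k) - fstar) := by
      rw [hρ]; field_simp
    exact h4.trans h5.le
  intro N
  induction N with
  | zero => simp
  | succ N ih =>
    calc f (x (N + 1)) - fstar ≤ ρ * (f (x N) - fstar) := hcontr N
      _ ≤ ρ * (ρ ^ N * (f (x 0) - fstar)) := mul_le_mul_of_nonneg_left ih hρ0
      _ = ρ ^ (N + 1) * (f (x 0) - fstar) := by ring
end

section
/- If f is L-smooth and the step x⁺ = x − h∇̃f(x) is taken with any h > 0 and ‖∇̃f(x) − ∇f(x)‖ ≤ α‖∇f(x)‖, then after finitely many doublings of a trial constant L' (starting from any L' > 0), the condition f(x⁺) ≤ f(x) + ⟨∇̃f(x), x⁺−x⟩ + (L'/2)‖x⁺−x‖² + (α/(1−α))‖∇̃f(x)‖‖x⁺−x‖ is satisfied; in particular it holds for every L' ≥ L. -/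
open scoped RealInnerProductSpace

set_option maxHeartbeats 1000000 in
lemma descent {n : ℕ} (f : EuclideanSpace ℝ (Fin n) → ℝ)
    (hf : Differentiable ℝ f) (L : ℝ) (hL : 0 ≤ L)
    (hsmooth : ∀ x y, ‖gradient f y - gradient f x‖ ≤ L * ‖y - x‖)
    (x y : EuclideanSpace ℝ (Fin n)) :
    f y ≤ f x + ⟪gradient f x, y - x⟫ + (L / 2) * ‖y - x‖ ^ 2 := by
  set d := y - x with hd
  set g : ℝ → ℝ := fun t => f (x + t • d) with hg
  have hcurve : ∀ t : ℝ, HasDerivAt (fun s : ℝ => x + s • d) d t := by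
    intro t
    simpa using ((hasDerivAt_id t).smul_const d).const_add x
  have hgrad_cont : Continuous (gradient f) :=
    (LipschitzWith.of_dist_le_mul (K := L.toNNReal) fun a b => by
      simpa [dist_eq_norm, Real.coe_toNNReal _ hL] using hsmooth b a).continuous
  have hg' : ∀ t : ℝ, HasDerivAt g (⟪gradient f (x + t • d), d⟫) t := by
    intro t
    have h1 : HasFDerivAt f (InnerProductSpace.toDual ℝ _ (gradient f (x + t • d))) (x + t • d) :=
      (hf (x + t • d)).hasGradientAt.hasFDerivAt
    simpa [InnerProductSpace.toDual_apply_apply, hg, Function.comp_def] using h1.comp_hasDerivAt t (hcurve t)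
  have hcont : Continuous fun t : ℝ => ⟪gradient f (x + t • d), d⟫ :=
    (hgrad_cont.comp (by continuity)).inner continuous_const
  have hFTC : ∫ t in (0:ℝ)..1, ⟪gradient f (x + t • d), d⟫ = g 1 - g 0 :=
    intervalIntegral.integral_eq_sub_of_hasDerivAt (fun t _ => hg' t)
      (hcont.intervalIntegrable 0 1)
  have hg0 : g 0 = f x := by simp [hg]
  have hg1 : g 1 = f y := by simp [hg, hd]
  have hmono : ∫ t in (0:ℝ)..1, ⟪gradient f (x + t • d), d⟫ ≤
      ∫ t in (0:ℝ)..1, (⟪gradient f x, d⟫ + L * t * ‖d‖ ^ 2) := by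
    apply intervalIntegral.integral_mono_on (by norm_num)
      (hcont.intervalIntegrable 0 1)
      ((by continuity : Continuous fun t : ℝ => ⟪gradient f x, d⟫ + L * t * ‖d‖ ^ 2).intervalIntegrable 0 1)
    intro t ht
    have key : ⟪gradient f (x + t • d) - gradient f x, d⟫ ≤ L * t * ‖d‖ ^ 2 := by
      have h1 : ⟪gradient f (x + t • d) - gradient f x, d⟫
          ≤ ‖gradient f (x + t • d) - gradient f x‖ * ‖d‖ := real_inner_le_norm _ _
      have h2 : ‖gradient f (x + t • d) - gradient f x‖ * ‖d‖ ≤ (L * ‖(x + t • d) - x‖) * ‖d‖ :=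
        mul_le_mul_of_nonneg_right (hsmooth x (x + t • d)) (norm_nonneg d)
      have h3 : ‖(x + t • d) - x‖ = t * ‖d‖ := by
        simp [norm_smul, abs_of_nonneg ht.1]
      rw [h3] at h2
      nlinarith [norm_nonneg d]
    have expand : ⟪gradient f (x + t • d) - gradient f x, d⟫
        = ⟪gradient f (x + t • d), d⟫ - ⟪gradient f x, d⟫ :=
      inner_sub_left _ _ _
    linarith
  have hint : ∫ t in (0:ℝ)..1, (⟪gradient f x, d⟫ + L * t * ‖d‖ ^ 2)
      = ⟪gradient f x, d⟫ + (L / 2) * ‖d‖ ^ 2 := by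
    rw [intervalIntegral.integral_add (intervalIntegrable_const)
      (((intervalIntegral.intervalIntegrable_id).const_mul L).mul_const (‖d‖ ^ 2))]
    have heq : (fun t : ℝ => L * t * ‖d‖ ^ 2) = fun t : ℝ => (L * ‖d‖ ^ 2) * t := by
      ext t; ring
    rw [heq, intervalIntegral.integral_const_mul, integral_id]
    simp; ring
  rw [hint] at hmono
  rw [hg0, hg1] at hFTC
  linarith

/-- Termination of the adaptive line search: the exit inequality holds for any
trial constant L' ≥ L; hence starting from any L₀ > 0 it holds after finitely
many doublings. -/
theorem stmt19 {n : ℕ} (f : EuclideanSpace ℝ (Fin n) → ℝ)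
    (hf : Differentiable ℝ f)
    (L : ℝ) (hL : 0 < L)
    (hsmooth : ∀ x y, ‖gradient f y - gradient f x‖ ≤ L * ‖y - x‖)
    (α : ℝ) (hα0 : 0 ≤ α) (hα1 : α < 1)
    (x tg : EuclideanSpace ℝ (Fin n))
    (herr : ‖tg - gradient f x‖ ≤ α * ‖gradient f x‖)
    (h : ℝ) (hh : 0 < h)
    (xplus : EuclideanSpace ℝ (Fin n)) (hx : xplus = x - h • tg) :
    (∀ L' : ℝ, L ≤ L' →
      f xplus ≤ f x + ⟪tg, xplus - x⟫ + (L' / 2) * ‖xplus - x‖ ^ 2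
        + (α / (1 - α)) * ‖tg‖ * ‖xplus - x‖) ∧
    (∀ L0 : ℝ, 0 < L0 → ∃ m : ℕ,
      f xplus ≤ f x + ⟪tg, xplus - x⟫ + (2 ^ m * L0 / 2) * ‖xplus - x‖ ^ 2
        + (α / (1 - α)) * ‖tg‖ * ‖xplus - x‖) := by
  have h1α : 0 < 1 - α := by linarith
  have hgx : (1 - α) * ‖gradient f x‖ ≤ ‖tg‖ := by
    have h1 : ‖gradient f x‖ - ‖tg‖ ≤ ‖gradient f x - tg‖ := norm_sub_norm_le _ _
    have h2 : ‖gradient f x - tg‖ = ‖tg - gradient f x‖ := norm_sub_rev _ _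
    linarith
  have key : ∀ L' : ℝ, L ≤ L' →
      f xplus ≤ f x + ⟪tg, xplus - x⟫ + (L' / 2) * ‖xplus - x‖ ^ 2
        + (α / (1 - α)) * ‖tg‖ * ‖xplus - x‖ := by
    intro L' hL'
    have hdesc := descent f hf L hL.le hsmooth x xplus
    have hip : ⟪gradient f x, xplus - x⟫ ≤ ⟪tg, xplus - x⟫
        + (α / (1 - α)) * ‖tg‖ * ‖xplus - x‖ := by
      have hsub : ⟪gradient f x - tg, xplus - x⟫
          = ⟪gradient f x, xplus - x⟫ - ⟪tg, xplus - x⟫ := inner_sub_left _ _ _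
      have hcs : ⟪gradient f x - tg, xplus - x⟫ ≤ ‖gradient f x - tg‖ * ‖xplus - x‖ :=
        real_inner_le_norm _ _
      have h2 : ‖gradient f x - tg‖ ≤ α * ‖gradient f x‖ := by
        rw [norm_sub_rev]; exact herr
      have h3 : α * ‖gradient f x‖ ≤ (α / (1 - α)) * ‖tg‖ := by
        rw [div_mul_eq_mul_div, le_div_iff₀ h1α]
        nlinarith
      have h4 : ‖gradient f x - tg‖ * ‖xplus - x‖ ≤ ((α / (1 - α)) * ‖tg‖) * ‖xplus - x‖ :=
        mul_le_mul_of_nonneg_right (h2.trans h3) (norm_nonneg _)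
      linarith
    have hL2 : (L / 2) * ‖xplus - x‖ ^ 2 ≤ (L' / 2) * ‖xplus - x‖ ^ 2 := by
      nlinarith [sq_nonneg ‖xplus - x‖]
    linarith
  refine ⟨key, fun L0 hL0 => ?_⟩
  obtain ⟨m, hm⟩ := pow_unbounded_of_one_lt (L / L0) (one_lt_two (α := ℝ))
  exact ⟨m, key _ (le_of_lt (by rwa [div_lt_iff₀ hL0] at hm))⟩
end
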